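/- arXiv:1803.04547 — 2 statements merged into one kernel-verified Lean document; each statement's English description precedes it below -/
import Mathlib

section
/- Deterministic form of the mean-parameter corollary for SC-RR: consider the SBM mean structure with k = min(k1,k2) and α = n2/n1, define the row mean parameters Λ_{sℓ} = B_{sℓ}·n_{2ℓ} for (s,ℓ) ∈ [k1]×[k2], the minimum separation Λ∧² = min_{s≠t} ‖Λ_{s*} − Λ_{t*}‖_2², and d = √(n2/n1)·‖Ψ‖_∞. Assume π_{rt} ≥ 1/(β_r·k_r) for all t and r = 1,2 (β_r ≥ 1), let A_re ∈ ℝ^{n1×n2} satisfy ‖A_re − P‖_op ≤ C·√d for some C > 0, let M be a best rank-k approximation of A_re (rank(M) ≤ k, ‖M − A_re‖_op ≤ σ_{k+1}(A_re)), let κ ≥ 1, and suppose 32·C²·(1+κ)²·β1·β2·k·k1·k2·α·‖Λ‖_∞ < Λ∧². Then every κ-approximate k-means solution X̃ ∈ KMM(n1,n2,k1) for M satisfies Mis(X̃, P) ≤ 32·C²·(1+κ)²·β2·k·k2·α·‖Λ‖_∞/Λ∧². -/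
open Matrix

noncomputable section

/-- Frobenius norm of a real matrix. -/
def frob {m n : Type*} [Fintype m] [Fintype n] (M : Matrix m n ℝ) : ℝ :=
  Real.sqrt (∑ i, ∑ j, (M i j) ^ 2)

/-- ℓ2→ℓ2 operator norm of a real matrix: sup of ‖Mx‖₂ over the ℓ2 unit ball. -/
def opNorm {m n : Type*} [Fintype m] [Fintype n] (M : Matrix m n ℝ) : ℝ :=
  sSup {t | ∃ x : n → ℝ, ∑ j, (x j) ^ 2 ≤ 1 ∧ t = Real.sqrt (∑ i, (M.mulVec x i) ^ 2)}

/-- `Z` is a membership matrix: 0/1 entries, exactly one 1 per row. -/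
def IsMembership {n k : ℕ} (Z : Matrix (Fin n) (Fin k) ℝ) : Prop :=
  (∀ i j, Z i j = 0 ∨ Z i j = 1) ∧ ∀ i, ∃! j, Z i j = 1

/-- size of the `j`-th cluster of a membership matrix. -/
def clusterSize {n k : ℕ} (Z : Matrix (Fin n) (Fin k) ℝ) (j : Fin k) : ℕ :=
  Set.ncard {i | Z i j = 1}

/-- `X` has at most `k` distinct rows (is a k-means matrix). -/
def IsKMM {n d : ℕ} (k : ℕ) (X : Matrix (Fin n) (Fin d) ℝ) : Prop :=
  ∃ g : Fin n → Fin k, ∀ i i', g i = g i' → X i = X i'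

/-- `g` is a labeling consistent with the rows of `X` (same label iff equal rows). -/
def IsLabeling {n d k : ℕ} (X : Matrix (Fin n) (Fin d) ℝ) (g : Fin n → Fin k) : Prop :=
  ∀ i i', g i = g i' ↔ X i = X i'

/-- average misclassification rate between two k-means matrices (min over label matchings). -/
def Mis {n d d' : ℕ} (k : ℕ) (X : Matrix (Fin n) (Fin d) ℝ) (Y : Matrix (Fin n) (Fin d') ℝ) : ℝ :=
  sInf {t | ∃ g g' : Fin n → Fin k, IsLabeling X g ∧ IsLabeling Y g' ∧
    t = (Set.ncard {i | g i ≠ g' i} : ℝ) / n}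

/-- `Xtil` is a κ-approximate k-means solution for `Xhat`. -/
def IsKApprox {n d : ℕ} (k : ℕ) (κ : ℝ) (Xhat Xtil : Matrix (Fin n) (Fin d) ℝ) : Prop :=
  IsKMM k Xtil ∧ ∀ X : Matrix (Fin n) (Fin d) ℝ, IsKMM k X →
    frob (Xhat - Xtil) ≤ κ * frob (Xhat - X)

/-- `σ_{k+1}(A)` via the Eckart–Young–Mirsky characterization. -/
def svalSucc {m n : ℕ} (A : Matrix (Fin m) (Fin n) ℝ) (k : ℕ) : ℝ :=
  sInf {t | ∃ N : Matrix (Fin m) (Fin n) ℝ, N.rank ≤ k ∧ t = opNorm (A - N)}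

open Module

variable {m n : Type*} [Fintype m] [Fintype n] [DecidableEq n] [DecidableEq m]
set_option linter.unusedSectionVars false

lemma norm_esymm (v : n → ℝ) :
    ‖(WithLp.equiv 2 (n → ℝ)).symm v‖ = Real.sqrt (∑ j, (v j)^2) := by
  rw [EuclideanSpace.norm_eq]
  congr 1
  exact Finset.sum_congr rfl fun j _ => by rw [Real.norm_eq_abs, sq_abs]; rfl

def mclm (M : Matrix m n ℝ) : EuclideanSpace ℝ n →L[ℝ] EuclideanSpace ℝ m :=
  LinearMap.toContinuousLinearMap (Matrix.toEuclideanLin M)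

lemma frob_eq (M : Matrix m n ℝ) :
    frob M = ‖(WithLp.equiv 2 (m × n → ℝ)).symm (fun p => M p.1 p.2)‖ := by
  rw [norm_esymm, frob]
  congr 1
  rw [Fintype.sum_prod_type]

lemma frob_nonneg (M : Matrix m n ℝ) : 0 ≤ frob M := Real.sqrt_nonneg _

lemma frob_sq (M : Matrix m n ℝ) : (frob M)^2 = ∑ i, ∑ j, (M i j) ^ 2 :=
  Real.sq_sqrt (Finset.sum_nonneg fun i _ => Finset.sum_nonneg fun j _ => sq_nonneg _)

lemma frob_add_le (A B : Matrix m n ℝ) : frob (A + B) ≤ frob A + frob B := by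
  rw [frob_eq, frob_eq, frob_eq]
  have : ((WithLp.equiv 2 (m × n → ℝ)).symm (fun p => (A + B) p.1 p.2)) =
      ((WithLp.equiv 2 (m × n → ℝ)).symm (fun p => A p.1 p.2)) +
      ((WithLp.equiv 2 (m × n → ℝ)).symm (fun p => B p.1 p.2)) := rfl
  rw [this]
  exact norm_add_le _ _

lemma frob_neg (A : Matrix m n ℝ) : frob (-A) = frob A := by
  rw [frob_eq, frob_eq]
  have : ((WithLp.equiv 2 (m × n → ℝ)).symm (fun p => (-A) p.1 p.2)) =
      -((WithLp.equiv 2 (m × n → ℝ)).symm (fun p => A p.1 p.2)) := rfl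
  rw [this, norm_neg]

lemma frob_sub_rev (A B : Matrix m n ℝ) : frob (A - B) = frob (B - A) := by
  rw [← frob_neg (A - B), neg_sub]

lemma mclm_add (A B : Matrix m n ℝ) : mclm (A + B) = mclm A + mclm B := by
  unfold mclm; rw [map_add]; rfl

lemma opNorm_eq (M : Matrix m n ℝ) : opNorm M = ‖mclm M‖ := by
  rw [opNorm, ← ContinuousLinearMap.sSup_unitClosedBall_eq_norm (mclm M)]
  congr 1
  ext t
  constructor
  · rintro ⟨x, hx, rfl⟩
    refine ⟨(WithLp.equiv 2 (n → ℝ)).symm x, ?_, ?_⟩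
    · rw [Metric.mem_closedBall, dist_zero_right, norm_esymm]
      exact Real.sqrt_le_one.2 hx
    · show ‖(mclm M) ((WithLp.equiv 2 (n → ℝ)).symm x)‖ = _
      rw [show (mclm M) ((WithLp.equiv 2 (n → ℝ)).symm x) =
        (WithLp.equiv 2 (m → ℝ)).symm (M.mulVec x) from rfl, norm_esymm]
  · rintro ⟨x, hx, rfl⟩
    refine ⟨WithLp.equiv 2 (n → ℝ) x, ?_, ?_⟩
    · have h := mem_closedBall_zero_iff.1 hx
      have : Real.sqrt (∑ j, ((WithLp.equiv 2 (n → ℝ)) x j)^2) ≤ 1 := by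
        rw [← norm_esymm]; simpa using h
      nlinarith [Real.sq_sqrt (Finset.sum_nonneg (fun j _ => sq_nonneg ((WithLp.equiv 2 (n → ℝ)) x j)) : (0:ℝ) ≤ ∑ j, ((WithLp.equiv 2 (n → ℝ)) x j)^2), Real.sqrt_nonneg (∑ j, ((WithLp.equiv 2 (n → ℝ)) x j)^2)]
    · show ‖(mclm M) x‖ = _
      rw [show (mclm M) x = (WithLp.equiv 2 (m → ℝ)).symm (M.mulVec ((WithLp.equiv 2 (n → ℝ)) x)) from rfl, norm_esymm]

lemma opNorm_nonneg (M : Matrix m n ℝ) : 0 ≤ opNorm M := by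
  rw [opNorm_eq]; exact norm_nonneg _

lemma opNorm_add_le (A B : Matrix m n ℝ) : opNorm (A + B) ≤ opNorm A + opNorm B := by
  rw [opNorm_eq, opNorm_eq, opNorm_eq, mclm_add]; exact norm_add_le _ _

lemma sqrt_sum_mulVec_le (M : Matrix m n ℝ) (v : n → ℝ) :
    Real.sqrt (∑ i, (M.mulVec v i)^2) ≤ opNorm M * Real.sqrt (∑ j, (v j)^2) := by
  have h := (mclm M).le_opNorm ((WithLp.equiv 2 (n → ℝ)).symm v)
  rw [norm_esymm, ← opNorm_eq] at h
  rw [show (mclm M) ((WithLp.equiv 2 (n → ℝ)).symm v) =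
      (WithLp.equiv 2 (m → ℝ)).symm (M.mulVec v) from rfl, norm_esymm] at h
  exact h

lemma enorm_sq {ι : Type*} [Fintype ι] [DecidableEq ι] (x : EuclideanSpace ℝ ι) : ‖x‖^2 = ∑ i, x i ^ 2 := by
  rw [show x = (WithLp.equiv 2 (ι → ℝ)).symm (fun i => x i) from rfl, norm_esymm]
  exact Real.sq_sqrt (Finset.sum_nonneg fun i _ => sq_nonneg _)

lemma frob_le_sqrt_rank_mul_opNorm (A : Matrix m n ℝ) :
    frob A ≤ Real.sqrt A.rank * opNorm A := by
  classical
  set e := WithLp.linearEquiv 2 ℝ (n → ℝ) with he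
  set V : Submodule ℝ (EuclideanSpace ℝ n) :=
    Submodule.span ℝ (Set.range fun i : m => e.symm (A i)) with hVdef
  have hrow : ∀ i, e.symm (A i) ∈ V := fun i => Submodule.subset_span ⟨i, rfl⟩
  have hV : finrank ℝ V = A.rank := by
    have h1 : V = Submodule.map ((e.symm : (n → ℝ) ≃ₗ[ℝ] EuclideanSpace ℝ n) : (n → ℝ) →ₗ[ℝ] EuclideanSpace ℝ n)
        (Submodule.span ℝ (Set.range A)) := by
      rw [Submodule.map_span]
      congr 1
      exact congrArg (Submodule.span ℝ) (Set.range_comp _ _)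
    rw [h1, LinearEquiv.finrank_map_eq, A.rank_eq_finrank_span_row]; rfl
  set b := stdOrthonormalBasis ℝ V with hb
  -- row norms via coordinates
  have key1 : ∀ i, ∑ j, (A i j)^2 =
      ∑ l : Fin (finrank ℝ V), (inner ℝ ((b l : V) : EuclideanSpace ℝ n) (e.symm (A i)) : ℝ)^2 := by
    intro i
    have h1 : ∑ j, (A i j)^2 = ‖e.symm (A i)‖^2 := by
      rw [show e.symm (A i) = (WithLp.equiv 2 (n → ℝ)).symm (A i) from rfl, norm_esymm]
      exact (Real.sq_sqrt (Finset.sum_nonneg fun j _ => sq_nonneg _)).symm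
    set v : V := ⟨e.symm (A i), hrow i⟩ with hv
    have h2 : ‖e.symm (A i)‖ = ‖v‖ := rfl
    have h3 : ‖v‖^2 = ‖b.repr v‖^2 := by rw [b.repr.norm_map]
    rw [h1, h2, h3, enorm_sq]
    apply Finset.sum_congr rfl
    intro l _
    rw [b.repr_apply_apply]
    rfl
  have key2 : ∀ l : Fin (finrank ℝ V), ∑ i, (inner ℝ ((b l : V) : EuclideanSpace ℝ n) (e.symm (A i)) : ℝ)^2
      ≤ (opNorm A)^2 := by
    intro l
    set u : EuclideanSpace ℝ n := ((b l : ↥V) : EuclideanSpace ℝ n) with hu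
    have hinner : ∀ i, (inner ℝ u (e.symm (A i)) : ℝ) = A.mulVec (fun j => u j) i := by
      intro i
      rw [PiLp.inner_apply]
      simp only [RCLike.inner_apply, conj_trivial]
      rw [mulVec]
      simp only [dotProduct]
      exact Finset.sum_congr rfl fun j _ => by
        show (e.symm (A i)) j * u j = A i j * u j
        have : (e.symm (A i)) j = A i j := rfl
        rw [this]
    have hnu : Real.sqrt (∑ j, (u j)^2) = 1 := by
      have h1 : ‖u‖ = 1 := b.orthonormal.1 l
      rw [show u = (WithLp.equiv 2 (n → ℝ)).symm (fun j => u j) from rfl, norm_esymm] at h1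
      exact h1
    have hb2 := sqrt_sum_mulVec_le A (fun j => u j)
    rw [hnu, mul_one] at hb2
    calc ∑ i, (inner ℝ u (e.symm (A i)) : ℝ)^2 = ∑ i, (A.mulVec (fun j => u j) i)^2 := by
          exact Finset.sum_congr rfl fun i _ => by rw [hinner]
      _ = (Real.sqrt (∑ i, (A.mulVec (fun j => u j) i)^2))^2 :=
          (Real.sq_sqrt (Finset.sum_nonneg fun i _ => sq_nonneg _)).symm
      _ ≤ (opNorm A)^2 := by
          have h0 : (0:ℝ) ≤ Real.sqrt (∑ i, (A.mulVec (fun j => u j) i)^2) := Real.sqrt_nonneg _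
          nlinarith [opNorm_nonneg A]
  have hfs : (frob A)^2 ≤ (finrank ℝ V : ℝ) * (opNorm A)^2 := by
    rw [frob_sq]
    calc ∑ i, ∑ j, (A i j)^2
        = ∑ i, ∑ l : Fin (finrank ℝ V), (inner ℝ ((b l : V) : EuclideanSpace ℝ n) (e.symm (A i)) : ℝ)^2 :=
          Finset.sum_congr rfl fun i _ => key1 i
      _ = ∑ l : Fin (finrank ℝ V), ∑ i, (inner ℝ ((b l : V) : EuclideanSpace ℝ n) (e.symm (A i)) : ℝ)^2 :=
          Finset.sum_comm
      _ ≤ ∑ _l : Fin (finrank ℝ V), (opNorm A)^2 := Finset.sum_le_sum fun l _ => key2 l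
      _ = (finrank ℝ V : ℝ) * (opNorm A)^2 := by rw [Finset.sum_const, Finset.card_univ, Fintype.card_fin,
          nsmul_eq_mul]
  have h1 : frob A = Real.sqrt ((frob A)^2) := (Real.sqrt_sq (frob_nonneg A)).symm
  rw [h1, ← hV]
  calc Real.sqrt ((frob A)^2) ≤ Real.sqrt ((finrank ℝ V : ℝ) * (opNorm A)^2) := Real.sqrt_le_sqrt hfs
    _ = Real.sqrt (finrank ℝ V : ℝ) * opNorm A := by
        rw [Real.sqrt_mul (by positivity), Real.sqrt_sq (opNorm_nonneg A)]

lemma dist_esymm {n : Type*} [Fintype n] [DecidableEq n] (u v : n → ℝ) :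
    dist ((WithLp.equiv 2 (n → ℝ)).symm u) ((WithLp.equiv 2 (n → ℝ)).symm v)
      = Real.sqrt (∑ j, (u j - v j)^2) := by
  rw [dist_eq_norm,
    show (WithLp.equiv 2 (n → ℝ)).symm u - (WithLp.equiv 2 (n → ℝ)).symm v
      = (WithLp.equiv 2 (n → ℝ)).symm (u - v) from rfl, norm_esymm]
  simp [Pi.sub_apply]

lemma memb_exists_g {n k : ℕ} {Z : Matrix (Fin n) (Fin k) ℝ} (hZ : IsMembership Z) :
    ∃ g : Fin n → Fin k, ∀ i j, Z i j = 1 ↔ g i = j := by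
  choose g hg1 hg2 using fun i => (hZ.2 i)
  refine ⟨g, fun i j => ⟨fun h => (hg2 i j h).symm ▸ rfl, fun h => h ▸ hg1 i⟩⟩

lemma memb_entry {n k : ℕ} {Z : Matrix (Fin n) (Fin k) ℝ} (hZ : IsMembership Z)
    {g : Fin n → Fin k} (hg : ∀ i j, Z i j = 1 ↔ g i = j) (i : Fin n) (j : Fin k) :
    Z i j = if g i = j then 1 else 0 := by
  by_cases h : g i = j
  · simp [h, (hg i j).2 h]
  · simp only [h, if_false]
    rcases hZ.1 i j with h0 | h1
    · exact h0
    · exact absurd ((hg i j).1 h1) h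

lemma clusterSize_eq {n k : ℕ} {Z : Matrix (Fin n) (Fin k) ℝ}
    {g : Fin n → Fin k} (hg : ∀ i j, Z i j = 1 ↔ g i = j) (j : Fin k) :
    clusterSize Z j = (Finset.univ.filter (fun i => g i = j)).card := by
  rw [clusterSize, show {i | Z i j = 1} = ↑(Finset.univ.filter (fun i => g i = j)) by
    ext i; simp [hg i j], Set.ncard_coe_finset]

lemma sum_fiber {n k : ℕ} (g : Fin n → Fin k) (F : Fin k → ℝ) :
    ∑ i, F (g i) = ∑ j, ((Finset.univ.filter (fun i => g i = j)).card : ℝ) * F j := by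
  classical
  rw [← Finset.sum_fiberwise_of_maps_to' (fun i _ => Finset.mem_univ (g i)) F]
  exact Finset.sum_congr rfl fun j _ => by rw [Finset.sum_const, nsmul_eq_mul]

set_option maxHeartbeats 2000000 in
/-- Corollary 5.1 (deterministic form of the mean-parameter corollary for SC-RR).
`Λ` collects the row mean parameters `Λ_{sℓ} = B_{sℓ} n_{2ℓ}`, `ΛInf = ‖Λ‖_∞`,
`ΛSep = Λ∧²` is the minimum squared row separation of `Λ`, and
`dd = √(n2/n1)·‖Ψ‖_∞`. -/
theorem stmt15 (n1 n2 k1 k2 : ℕ)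
    (Z1 : Matrix (Fin n1) (Fin k1) ℝ) (Z2 : Matrix (Fin n2) (Fin k2) ℝ)
    (hZ1 : IsMembership Z1) (hZ2 : IsMembership Z2)
    (hpos1 : ∀ j, 0 < clusterSize Z1 j) (hpos2 : ∀ j, 0 < clusterSize Z2 j)
    (Ψ : Matrix (Fin k1) (Fin k2) ℝ) (hΨ : ∀ s ℓ, 0 ≤ Ψ s ℓ)
    (P : Matrix (Fin n1) (Fin n2) ℝ)
    (hP : P = Z1 * ((Real.sqrt ((n1 : ℝ) * n2))⁻¹ • Ψ) * Z2ᵀ)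
    (β1 β2 : ℝ) (hβ1 : 1 ≤ β1) (hβ2 : 1 ≤ β2)
    (hπ1 : ∀ t : Fin k1, 1 / (β1 * k1) ≤ (clusterSize Z1 t : ℝ) / n1)
    (hπ2 : ∀ s : Fin k2, 1 / (β2 * k2) ≤ (clusterSize Z2 s : ℝ) / n2)
    (Λ : Matrix (Fin k1) (Fin k2) ℝ)
    (hΛ : ∀ s ℓ, Λ s ℓ = (Real.sqrt ((n1 : ℝ) * n2))⁻¹ * Ψ s ℓ * (clusterSize Z2 ℓ : ℝ))
    (ΛInf : ℝ) (hΛInf : ΛInf = sSup {v | ∃ s ℓ, v = |Λ s ℓ|})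
    (ΛSep : ℝ)
    (hΛSep : ΛSep = sInf {v | ∃ s t : Fin k1, s ≠ t ∧ v = ∑ ℓ, (Λ s ℓ - Λ t ℓ) ^ 2})
    (dd : ℝ) (hdd : dd = Real.sqrt ((n2 : ℝ) / n1) * sSup {v | ∃ s ℓ, v = Ψ s ℓ})
    (C : ℝ) (hC : 0 < C)
    (Are : Matrix (Fin n1) (Fin n2) ℝ) (hcon : opNorm (Are - P) ≤ C * Real.sqrt dd)
    (M : Matrix (Fin n1) (Fin n2) ℝ)
    (hMrank : M.rank ≤ min k1 k2)
    (hMbest : opNorm (M - Are) ≤ svalSucc Are (min k1 k2))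
    (κ : ℝ) (hκ : 1 ≤ κ)
    (hcond : 32 * C ^ 2 * (1 + κ) ^ 2 * β1 * β2 * (min k1 k2) * k1 * k2 *
      ((n2 : ℝ) / n1) * ΛInf < ΛSep) :
    ∀ Xt : Matrix (Fin n1) (Fin n2) ℝ, IsKApprox k1 κ M Xt →
      Mis k1 Xt P ≤
        32 * C ^ 2 * (1 + κ) ^ 2 * β2 * (min k1 k2) * k2 * ((n2 : ℝ) / n1) * ΛInf / ΛSep := by

  classical
  intro Xt hXt
  obtain ⟨g1, hg1⟩ := memb_exists_g hZ1
  obtain ⟨g2, hg2⟩ := memb_exists_g hZ2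
  set c : ℝ := (Real.sqrt ((n1 : ℝ) * n2))⁻¹ with hc
  set kk : ℕ := min k1 k2 with hkk
  -- nonnegativity of ΛInf
  have hΛInf0 : 0 ≤ ΛInf := by
    rcases isEmpty_or_nonempty (Fin k1) with h1 | h1
    · rw [hΛInf, show {v | ∃ s ℓ, v = |Λ s ℓ|} = (∅ : Set ℝ) by
        ext v
        simp only [Set.mem_setOf_eq, Set.mem_empty_iff_false, iff_false, not_exists]
        exact fun s => (h1.false s).elim, Real.sSup_empty]
    rcases isEmpty_or_nonempty (Fin k2) with h2 | h2
    · rw [hΛInf, show {v | ∃ s ℓ, v = |Λ s ℓ|} = (∅ : Set ℝ) by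
        ext v
        simp only [Set.mem_setOf_eq, Set.mem_empty_iff_false, iff_false, not_exists]
        exact fun s ℓ => (h2.false ℓ).elim, Real.sSup_empty]
    · obtain ⟨s⟩ := h1; obtain ⟨ℓ⟩ := h2
      have hbdd : BddAbove {v | ∃ s ℓ, v = |Λ s ℓ|} := by
        have : {v | ∃ s ℓ, v = |Λ s ℓ|} = Set.range (fun p : Fin k1 × Fin k2 => |Λ p.1 p.2|) := by
          ext v; constructor
          · rintro ⟨s, ℓ, rfl⟩; exact ⟨(s, ℓ), rfl⟩
          · rintro ⟨⟨s, ℓ⟩, rfl⟩; exact ⟨s, ℓ, rfl⟩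
        rw [this]; exact (Set.finite_range _).bddAbove
      calc (0:ℝ) ≤ |Λ s ℓ| := abs_nonneg _
        _ ≤ ΛInf := hΛInf ▸ le_csSup hbdd ⟨s, ℓ, rfl⟩
  have hLHS0 : 0 ≤ 32 * C ^ 2 * (1 + κ) ^ 2 * β1 * β2 * (kk : ℝ) * k1 * k2 *
      ((n2 : ℝ) / n1) * ΛInf := by
    have h0 : (0:ℝ) ≤ 32 * C ^ 2 * (1 + κ) ^ 2 * β1 * β2 * (kk : ℝ) * k1 * k2 *
        ((n2 : ℝ) / n1) := by positivity
    exact mul_nonneg h0 hΛInf0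
  have hSep : 0 < ΛSep := lt_of_le_of_lt hLHS0 hcond
  have hSepBdd : BddBelow {v | ∃ s t : Fin k1, s ≠ t ∧ v = ∑ ℓ, (Λ s ℓ - Λ t ℓ) ^ 2} := by
    refine ⟨0, ?_⟩; rintro v ⟨s, t, _, rfl⟩
    exact Finset.sum_nonneg fun ℓ _ => sq_nonneg _
  have hk1_2 : 2 ≤ k1 := by
    by_contra h
    push_neg at h
    have hempty : {v | ∃ s t : Fin k1, s ≠ t ∧ v = ∑ ℓ, (Λ s ℓ - Λ t ℓ) ^ 2} = ∅ := by
      ext v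
      simp only [Set.mem_setOf_eq, Set.mem_empty_iff_false, iff_false, not_exists]
      rintro s t ⟨hst, _⟩
      exact hst (by omega)
    rw [hΛSep, hempty, Real.sInf_empty] at hSep
    exact lt_irrefl _ hSep
  have hk2 : 0 < k2 := by
    rcases Nat.eq_zero_or_pos k2 with h | h
    · exfalso
      have hs : (⟨0, by omega⟩ : Fin k1) ≠ (⟨1, by omega⟩ : Fin k1) := by
        intro hcontra
        exact absurd (congrArg Fin.val hcontra) (by simp)
      have hmem : (0:ℝ) ∈ {v | ∃ s t : Fin k1, s ≠ t ∧ v = ∑ ℓ, (Λ s ℓ - Λ t ℓ) ^ 2} := by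
        refine ⟨_, _, hs, ?_⟩
        subst h
        simp
      have := csInf_le hSepBdd hmem
      rw [← hΛSep] at this
      linarith
    · exact h
  have hk1 : 0 < k1 := by omega
  have hn1 : 0 < n1 := by
    have h := hpos1 ⟨0, hk1⟩
    rw [clusterSize_eq hg1] at h
    obtain ⟨i, _⟩ := Finset.card_pos.mp h
    exact i.pos
  have hn2 : 0 < n2 := by
    have h := hpos2 ⟨0, hk2⟩
    rw [clusterSize_eq hg2] at h
    obtain ⟨i, _⟩ := Finset.card_pos.mp h
    exact i.pos
  have hn1R : (0:ℝ) < n1 := by exact_mod_cast hn1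
  have hn2R : (0:ℝ) < n2 := by exact_mod_cast hn2
  have hc0 : 0 ≤ c := by rw [hc]; positivity
  have hZ1e := memb_entry hZ1 hg1
  have hZ2e := memb_entry hZ2 hg2
  have hPentry : ∀ i ℓ', P i ℓ' = c * Ψ (g1 i) (g2 ℓ') := by
    intro i ℓ'
    rw [hP, Matrix.mul_apply]
    have h1 : ∀ t, (Z1 * (c • Ψ)) i t = c * Ψ (g1 i) t := by
      intro t
      rw [Matrix.mul_apply, Finset.sum_eq_single (g1 i)]
      · rw [hZ1e i (g1 i)]; simp
      · intro s _ hs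
        rw [hZ1e i s]
        simp [Ne.symm hs]
      · intro h; exact absurd (Finset.mem_univ _) h
    calc ∑ t, (Z1 * (c • Ψ)) i t * Z2ᵀ t ℓ'
        = ∑ t, (c * Ψ (g1 i) t) * Z2 ℓ' t :=
          Finset.sum_congr rfl fun t _ => by rw [h1, Matrix.transpose_apply]
      _ = c * Ψ (g1 i) (g2 ℓ') := by
          rw [Finset.sum_eq_single (g2 ℓ')]
          · rw [hZ2e ℓ' (g2 ℓ')]; simp
          · intro t _ ht
            rw [hZ2e ℓ' t]
            simp [Ne.symm ht]
          · intro h; exact absurd (Finset.mem_univ _) h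
  have hProw : ∀ i i', g1 i = g1 i' → P i = P i' := by
    intro i i' h
    funext ℓ'
    rw [hPentry, hPentry, h]
  have hcl2 : ∀ ℓ, 0 < (clusterSize Z2 ℓ : ℝ) ∧ (clusterSize Z2 ℓ : ℝ) ≤ n2 := by
    intro ℓ
    constructor
    · exact_mod_cast hpos2 ℓ
    · have : clusterSize Z2 ℓ ≤ n2 := by
        rw [clusterSize_eq hg2]
        calc (Finset.univ.filter (fun i => g2 i = ℓ)).card ≤ Finset.univ.card :=
              Finset.card_filter_le _ _
          _ = n2 := by rw [Finset.card_univ, Fintype.card_fin]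
      exact_mod_cast this
  have hsep : ∀ i i', g1 i ≠ g1 i' → ΛSep / n2 ≤ ∑ ℓ', (P i ℓ' - P i' ℓ')^2 := by
    intro i i' hne
    have h1 : ∑ ℓ', (P i ℓ' - P i' ℓ')^2
        = ∑ ℓ : Fin k2, ((Finset.univ.filter (fun x => g2 x = ℓ)).card : ℝ) *
            (c * Ψ (g1 i) ℓ - c * Ψ (g1 i') ℓ)^2 := by
      rw [show (∑ ℓ', (P i ℓ' - P i' ℓ')^2)
          = ∑ ℓ', (fun ℓ => (c * Ψ (g1 i) ℓ - c * Ψ (g1 i') ℓ)^2) (g2 ℓ') from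
        Finset.sum_congr rfl fun ℓ' _ => by rw [hPentry, hPentry]]
      exact sum_fiber g2 (fun ℓ => (c * Ψ (g1 i) ℓ - c * Ψ (g1 i') ℓ)^2)
    rw [h1]
    have h2 : ∀ ℓ : Fin k2, (Λ (g1 i) ℓ - Λ (g1 i') ℓ)^2 / n2 ≤
        ((Finset.univ.filter (fun x => g2 x = ℓ)).card : ℝ) *
          (c * Ψ (g1 i) ℓ - c * Ψ (g1 i') ℓ)^2 := by
      intro ℓ
      have hcs := hcl2 ℓ
      rw [clusterSize_eq hg2] at hcs
      have hΛd : Λ (g1 i) ℓ - Λ (g1 i') ℓ =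
          ((Finset.univ.filter (fun x => g2 x = ℓ)).card : ℝ) *
            (c * Ψ (g1 i) ℓ - c * Ψ (g1 i') ℓ) := by
        rw [hΛ, hΛ, clusterSize_eq hg2]
        ring
      rw [hΛd]
      rw [div_le_iff₀ hn2R]
      set q : ℝ := ((Finset.univ.filter (fun x => g2 x = ℓ)).card : ℝ)
      set w : ℝ := c * Ψ (g1 i) ℓ - c * Ψ (g1 i') ℓ
      nlinarith [sq_nonneg w, hcs.1, hcs.2, mul_nonneg (le_of_lt hcs.1) (sq_nonneg w)]
    have h3 : ΛSep ≤ ∑ ℓ, (Λ (g1 i) ℓ - Λ (g1 i') ℓ)^2 := by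
      rw [hΛSep]
      exact csInf_le hSepBdd ⟨g1 i, g1 i', hne, rfl⟩
    calc ΛSep / n2 ≤ (∑ ℓ, (Λ (g1 i) ℓ - Λ (g1 i') ℓ)^2) / n2 := by gcongr
      _ = ∑ ℓ, (Λ (g1 i) ℓ - Λ (g1 i') ℓ)^2 / n2 := Finset.sum_div _ _ _
      _ ≤ _ := Finset.sum_le_sum fun ℓ _ => h2 ℓ
  -- bounds involving dd
  have hΛbdd : BddAbove {v | ∃ s ℓ, v = |Λ s ℓ|} := by
    have : {v | ∃ s ℓ, v = |Λ s ℓ|} = Set.range (fun p : Fin k1 × Fin k2 => |Λ p.1 p.2|) := by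
      ext v; constructor
      · rintro ⟨s, ℓ, rfl⟩; exact ⟨(s, ℓ), rfl⟩
      · rintro ⟨⟨s, ℓ⟩, rfl⟩; exact ⟨s, ℓ, rfl⟩
    rw [this]; exact (Set.finite_range _).bddAbove
  have hΛle : ∀ s ℓ, Λ s ℓ ≤ ΛInf := by
    intro s ℓ
    have h1 : |Λ s ℓ| ≤ ΛInf := hΛInf ▸ le_csSup hΛbdd ⟨s, ℓ, rfl⟩
    exact (le_abs_self _).trans h1
  have hΛnn : ∀ s ℓ, 0 ≤ Λ s ℓ := by
    intro s ℓ
    rw [hΛ]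
    have := hΨ s ℓ
    have := (hcl2 ℓ).1
    positivity
  have hsqrtc : Real.sqrt ((n2:ℝ)/n1) = n2 * c := by
    rw [hc]
    rw [show ((n2:ℝ)/n1) = (n2:ℝ)^2 / ((n1:ℝ)*n2) by field_simp]
    rw [Real.sqrt_div (by positivity : (0:ℝ) ≤ (n2:ℝ)^2), Real.sqrt_sq hn2R.le, div_eq_mul_inv]
  have hΨbdd : BddAbove {v | ∃ s ℓ, v = Ψ s ℓ} := by
    have : {v | ∃ s ℓ, v = Ψ s ℓ} = Set.range (fun p : Fin k1 × Fin k2 => Ψ p.1 p.2) := by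
      ext v; constructor
      · rintro ⟨s, ℓ, rfl⟩; exact ⟨(s, ℓ), rfl⟩
      · rintro ⟨⟨s, ℓ⟩, rfl⟩; exact ⟨s, ℓ, rfl⟩
    rw [this]; exact (Set.finite_range _).bddAbove
  have hΨne : {v | ∃ s ℓ, v = Ψ s ℓ}.Nonempty := ⟨Ψ ⟨0, hk1⟩ ⟨0, hk2⟩, ⟨0, hk1⟩, ⟨0, hk2⟩, rfl⟩
  have hsqrtαpos : 0 < Real.sqrt ((n2:ℝ)/n1) := Real.sqrt_pos.2 (by positivity)
  have hdd0 : 0 ≤ dd := by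
    rw [hdd]
    refine mul_nonneg (Real.sqrt_nonneg _) ?_
    calc (0:ℝ) ≤ Ψ ⟨0, hk1⟩ ⟨0, hk2⟩ := hΨ _ _
      _ ≤ _ := le_csSup hΨbdd ⟨⟨0, hk1⟩, ⟨0, hk2⟩, rfl⟩
  have hkey : ∀ s ℓ, Real.sqrt ((n2:ℝ)/n1) * Ψ s ℓ ≤ β2 * k2 * ΛInf := by
    intro s ℓ
    have h1 : c * Ψ s ℓ * (clusterSize Z2 ℓ : ℝ) ≤ ΛInf := by
      rw [← hΛ]; exact hΛle s ℓ
    have h2 : (n2:ℝ) ≤ β2 * k2 * (clusterSize Z2 ℓ : ℝ) := by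
      have := hπ2 ℓ
      rw [div_le_div_iff₀ (by positivity) hn2R] at this
      nlinarith
    rw [hsqrtc]
    have hcΨ : 0 ≤ c * Ψ s ℓ := mul_nonneg hc0 (hΨ s ℓ)
    nlinarith [mul_le_mul_of_nonneg_left h2 hcΨ, mul_le_mul_of_nonneg_left h1
      (show (0:ℝ) ≤ β2 * k2 by positivity)]
  have hddle : dd ≤ β2 * k2 * ΛInf := by
    rw [hdd]
    have hsup : sSup {v | ∃ s ℓ, v = Ψ s ℓ} ≤ (β2 * k2 * ΛInf) / Real.sqrt ((n2:ℝ)/n1) := by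
      apply csSup_le hΨne
      rintro v ⟨s, ℓ, rfl⟩
      rw [le_div_iff₀ hsqrtαpos, mul_comm]
      exact hkey s ℓ
    calc Real.sqrt ((n2:ℝ)/n1) * sSup {v | ∃ s ℓ, v = Ψ s ℓ}
        ≤ Real.sqrt ((n2:ℝ)/n1) * ((β2 * k2 * ΛInf) / Real.sqrt ((n2:ℝ)/n1)) := by
          exact mul_le_mul_of_nonneg_left hsup hsqrtαpos.le
      _ = β2 * k2 * ΛInf := by field_simp
  -- rank and operator norm chain
  have hPrank : P.rank ≤ kk := by
    rw [hP]
    refine le_min ?_ ?_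
    · calc (Z1 * ((Real.sqrt ((n1:ℝ)*n2))⁻¹ • Ψ) * Z2ᵀ).rank
          ≤ (Z1 * ((Real.sqrt ((n1:ℝ)*n2))⁻¹ • Ψ)).rank := Matrix.rank_mul_le_left _ _
        _ ≤ ((Real.sqrt ((n1:ℝ)*n2))⁻¹ • Ψ).rank := Matrix.rank_mul_le_right _ _
        _ ≤ k1 := by
            have := Matrix.rank_le_card_height ((Real.sqrt ((n1:ℝ)*n2))⁻¹ • Ψ)
            simpa using this
    · calc (Z1 * ((Real.sqrt ((n1:ℝ)*n2))⁻¹ • Ψ) * Z2ᵀ).rank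
          ≤ (Z1 * ((Real.sqrt ((n1:ℝ)*n2))⁻¹ • Ψ)).rank := Matrix.rank_mul_le_left _ _
        _ ≤ ((Real.sqrt ((n1:ℝ)*n2))⁻¹ • Ψ).rank := Matrix.rank_mul_le_right _ _
        _ ≤ k2 := by
            have := Matrix.rank_le_card_width ((Real.sqrt ((n1:ℝ)*n2))⁻¹ • Ψ)
            simpa using this
  have hMPrank : (M - P).rank ≤ 2 * kk := by
    have h1 : LinearMap.range (M - P).mulVecLin ≤
        LinearMap.range M.mulVecLin ⊔ LinearMap.range P.mulVecLin := by
      rintro x ⟨v, rfl⟩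
      rw [Matrix.mulVecLin_apply, Matrix.sub_mulVec]
      exact Submodule.sub_mem _ (Submodule.mem_sup_left ⟨v, rfl⟩)
        (Submodule.mem_sup_right ⟨v, rfl⟩)
    calc (M - P).rank ≤ finrank ℝ
          ↥(LinearMap.range M.mulVecLin ⊔ LinearMap.range P.mulVecLin) :=
          Submodule.finrank_mono h1
      _ ≤ M.rank + P.rank := Submodule.finrank_add_le_finrank_add_finrank _ _
      _ ≤ kk + kk := Nat.add_le_add hMrank hPrank
      _ = 2 * kk := by ring
  have hsval : svalSucc Are kk ≤ C * Real.sqrt dd := by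
    refine le_trans (csInf_le ?_ ⟨P, hPrank, rfl⟩) hcon
    refine ⟨0, ?_⟩
    rintro v ⟨N, _, rfl⟩
    exact opNorm_nonneg _
  have hopMP : opNorm (M - P) ≤ 2 * (C * Real.sqrt dd) := by
    have h1 : M - P = (M - Are) + (Are - P) := (sub_add_sub_cancel _ _ _).symm
    rw [h1]
    calc opNorm ((M - Are) + (Are - P)) ≤ opNorm (M - Are) + opNorm (Are - P) :=
          opNorm_add_le _ _
      _ ≤ (C * Real.sqrt dd) + (C * Real.sqrt dd) := add_le_add (hMbest.trans hsval) hcon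
      _ = 2 * (C * Real.sqrt dd) := by ring
  have hfMP : frob (M - P) ≤ Real.sqrt (2 * kk) * (2 * (C * Real.sqrt dd)) := by
    calc frob (M - P) ≤ Real.sqrt ((M - P).rank) * opNorm (M - P) :=
          frob_le_sqrt_rank_mul_opNorm _
      _ ≤ Real.sqrt (2 * kk) * (2 * (C * Real.sqrt dd)) := by
          apply mul_le_mul
          · apply Real.sqrt_le_sqrt
            exact_mod_cast hMPrank
          · exact hopMP
          · exact opNorm_nonneg _
          · positivity
  have hPKMM : IsKMM k1 P := ⟨g1, fun i i' h => hProw i i' h⟩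
  have hfXtP : frob (Xt - P) ≤ (1 + κ) * frob (M - P) := by
    have h1 : Xt - P = (Xt - M) + (M - P) := (sub_add_sub_cancel _ _ _).symm
    calc frob (Xt - P) = frob ((Xt - M) + (M - P)) := by rw [← h1]
      _ ≤ frob (Xt - M) + frob (M - P) := frob_add_le _ _
      _ = frob (M - Xt) + frob (M - P) := by rw [frob_sub_rev]
      _ ≤ κ * frob (M - P) + frob (M - P) := by
          have := hXt.2 P hPKMM
          linarith
      _ = (1 + κ) * frob (M - P) := by ring
  have hF2 : (frob (Xt - P))^2 ≤ 8 * (1+κ)^2 * kk * C^2 * dd := by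
    have hR : frob (Xt - P) ≤ (1+κ) * (Real.sqrt (2 * kk) * (2 * (C * Real.sqrt dd))) := by
      refine hfXtP.trans ?_
      exact mul_le_mul_of_nonneg_left hfMP (by positivity)
    have h2 : (frob (Xt - P))^2 ≤ ((1+κ) * (Real.sqrt (2 * kk) * (2 * (C * Real.sqrt dd))))^2 :=
      pow_le_pow_left₀ (frob_nonneg _) hR 2
    calc (frob (Xt - P))^2 ≤ ((1+κ) * (Real.sqrt (2 * kk) * (2 * (C * Real.sqrt dd))))^2 := h2
      _ = (1+κ)^2 * ((Real.sqrt (2*kk))^2 * (4 * C^2 * (Real.sqrt dd)^2)) := by ring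
      _ = 8 * (1+κ)^2 * kk * C^2 * dd := by
          rw [Real.sq_sqrt (by positivity : (0:ℝ) ≤ 2 * (kk:ℝ)), Real.sq_sqrt hdd0]
          ring
  have hF2' : (frob (Xt - P))^2 ≤ 8 * (1+κ)^2 * kk * C^2 * (β2 * k2 * ΛInf) := by
    refine hF2.trans ?_
    exact mul_le_mul_of_nonneg_left hddle (by positivity)
  -- counting
  set δ : ℝ := Real.sqrt (ΛSep / n2) with hδ
  have hδpos : 0 < δ := Real.sqrt_pos.2 (by positivity)
  set S : Finset (Fin n1) :=
    Finset.univ.filter (fun i => ΛSep/(4*n2) ≤ ∑ ℓ', (Xt i ℓ' - P i ℓ')^2) with hSdef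
  have hScard : (S.card:ℝ) * (ΛSep/(4*n2)) ≤ (frob (Xt - P))^2 := by
    rw [frob_sq]
    calc (S.card:ℝ) * (ΛSep/(4*n2)) = ∑ _i ∈ S, ΛSep/(4*n2) := by
          rw [Finset.sum_const, nsmul_eq_mul]
      _ ≤ ∑ i ∈ S, ∑ ℓ', (Xt i ℓ' - P i ℓ')^2 :=
          Finset.sum_le_sum fun i hi => (Finset.mem_filter.mp hi).2
      _ ≤ ∑ i, ∑ ℓ', (Xt i ℓ' - P i ℓ')^2 :=
          Finset.sum_le_sum_of_subset_of_nonneg (Finset.subset_univ S)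
            (fun i _ _ => Finset.sum_nonneg fun ℓ' _ => sq_nonneg _)
      _ = ∑ i, ∑ ℓ', ((Xt - P) i ℓ')^2 := by simp [Matrix.sub_apply]
  have hcard_le : (S.card:ℝ) * ΛSep ≤
      (32 * C ^ 2 * (1 + κ) ^ 2 * β2 * (kk:ℝ) * k2 * ((n2:ℝ)/n1) * ΛInf) * n1 := by
    have h1 : (32 * C ^ 2 * (1 + κ) ^ 2 * β2 * (kk:ℝ) * k2 * ((n2:ℝ)/n1) * ΛInf) * n1
        = (4*(n2:ℝ)) * (8 * (1+κ)^2 * kk * C^2 * (β2 * k2 * ΛInf)) := by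
      field_simp
      ring
    have h2 : (S.card:ℝ) * ΛSep = (4*(n2:ℝ)) * ((S.card:ℝ) * (ΛSep/(4*n2))) := by
      field_simp
    rw [h1, h2]
    calc (4*(n2:ℝ)) * ((S.card:ℝ) * (ΛSep/(4*n2)))
        ≤ (4*(n2:ℝ)) * ((frob (Xt - P))^2) := by
          exact mul_le_mul_of_nonneg_left hScard (by positivity)
      _ ≤ (4*(n2:ℝ)) * (8 * (1+κ)^2 * kk * C^2 * (β2 * k2 * ΛInf)) := by
          exact mul_le_mul_of_nonneg_left hF2' (by positivity)
  have hcondX : (32 * C ^ 2 * (1 + κ) ^ 2 * β2 * (kk:ℝ) * k2 * ((n2:ℝ)/n1) * ΛInf) * (β1 * k1)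
      < ΛSep := by
    calc (32 * C ^ 2 * (1 + κ) ^ 2 * β2 * (kk:ℝ) * k2 * ((n2:ℝ)/n1) * ΛInf) * (β1 * k1)
        = 32 * C ^ 2 * (1 + κ) ^ 2 * β1 * β2 * (kk:ℝ) * k1 * k2 * ((n2:ℝ)/n1) * ΛInf := by ring
      _ < ΛSep := hcond
  have hSlt : ∀ s : Fin k1, S.card < clusterSize Z1 s := by
    intro s
    have h1 : (n1:ℝ)/(β1*k1) ≤ (clusterSize Z1 s : ℝ) := by
      have h := hπ1 s
      rw [div_le_div_iff₀ (by positivity) hn1R] at h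
      rw [div_le_iff₀ (by positivity)]
      nlinarith
    have h2 : (S.card:ℝ) < (n1:ℝ)/(β1*k1) := by
      rw [lt_div_iff₀ (by positivity)]
      nlinarith [mul_le_mul_of_nonneg_right hcard_le (show (0:ℝ) ≤ β1*k1 by positivity),
        mul_lt_mul_of_pos_right hcondX hn1R, hSep, Nat.cast_nonneg (α := ℝ) S.card]
    have : (S.card:ℝ) < (clusterSize Z1 s : ℝ) := lt_of_lt_of_le h2 h1
    exact_mod_cast this
  have hrepex : ∀ s : Fin k1, ∃ i, g1 i = s ∧ i ∉ S := by
    intro s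
    by_contra h
    push_neg at h
    have hsub2 : Finset.univ.filter (fun i => g1 i = s) ⊆ S := by
      intro i hi
      exact h i (Finset.mem_filter.mp hi).2
    have := Finset.card_le_card hsub2
    rw [← clusterSize_eq hg1] at this
    exact absurd (hSlt s) (by omega)
  choose rep hrep1 hrep2 using hrepex
  set ev : (Fin n2 → ℝ) → EuclideanSpace ℝ (Fin n2) :=
    fun u => (WithLp.equiv 2 (Fin n2 → ℝ)).symm u with hev
  have hdistXP : ∀ i, i ∉ S → dist (ev (Xt i)) (ev (P i)) < δ/2 := by
    intro i hi
    have h1 : ∑ ℓ', (Xt i ℓ' - P i ℓ')^2 < ΛSep/(4*n2) := by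
      by_contra h
      push_neg at h
      exact hi (Finset.mem_filter.mpr ⟨Finset.mem_univ _, h⟩)
    have h2 : Real.sqrt (∑ ℓ', (Xt i ℓ' - P i ℓ')^2) < Real.sqrt (ΛSep/(4*n2)) :=
      Real.sqrt_lt_sqrt (Finset.sum_nonneg fun ℓ' _ => sq_nonneg _) h1
    have h3 : Real.sqrt (ΛSep/(4*n2)) = δ/2 := by
      rw [hδ, show ΛSep/(4*(n2:ℝ)) = (ΛSep/n2)/4 by ring,
        Real.sqrt_div (by positivity : (0:ℝ) ≤ ΛSep/n2),
        show Real.sqrt 4 = 2 by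
          rw [show (4:ℝ) = 2^2 by norm_num, Real.sqrt_sq (by norm_num : (0:ℝ) ≤ 2)]]
    rw [hev, dist_esymm]
    rw [h3] at h2
    exact h2
  have hdistPP : ∀ i i', g1 i ≠ g1 i' → δ ≤ dist (ev (P i)) (ev (P i')) := by
    intro i i' h
    rw [hev, dist_esymm, hδ]
    exact Real.sqrt_le_sqrt (hsep i i' h)
  obtain ⟨g0, hg0⟩ := hXt.1
  have hrepdist : ∀ s t : Fin k1, s ≠ t → Xt (rep s) ≠ Xt (rep t) := by
    intro s t hst heq
    have h1 : δ ≤ dist (ev (P (rep s))) (ev (P (rep t))) :=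
      hdistPP _ _ (by rw [hrep1, hrep1]; exact hst)
    have h2 := hdistXP _ (hrep2 s)
    have h3 := hdistXP _ (hrep2 t)
    have h4 : dist (ev (P (rep s))) (ev (P (rep t))) ≤
        dist (ev (P (rep s))) (ev (Xt (rep t))) + dist (ev (Xt (rep t))) (ev (P (rep t))) :=
      dist_triangle _ _ _
    rw [← heq] at h4 h3
    linarith [h1, h2, h3, h4, dist_comm (ev (P (rep s))) (ev (P (rep t))),
      dist_comm (ev (Xt (rep s))) (ev (P (rep s)))]
  have hφinj : Function.Injective (fun s => g0 (rep s)) := by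
    intro s t h
    by_contra hst
    exact hrepdist s t hst (hg0 _ _ h)
  have hφbij : Function.Bijective (fun s => g0 (rep s)) :=
    Finite.injective_iff_bijective.1 hφinj
  set σ := Equiv.ofBijective _ hφbij with hσ
  set g : Fin n1 → Fin k1 := fun i => σ.symm (g0 i) with hgdef
  have hgrep : ∀ i, Xt i = Xt (rep (g i)) := by
    intro i
    apply hg0
    have h1 : σ (σ.symm (g0 i)) = g0 i := σ.apply_symm_apply _
    exact h1.symm
  have hglab : IsLabeling Xt g := by
    intro i i'
    constructor
    · intro h
      rw [hgrep i, hgrep i', h]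
    · intro h
      by_contra hne
      exact hrepdist _ _ hne (by rw [← hgrep i, ← hgrep i', h])
  have hg1lab : IsLabeling P g1 := by
    intro i i'
    constructor
    · exact hProw i i'
    · intro h
      by_contra hne
      have h1 := hsep i i' hne
      rw [h] at h1
      simp only [sub_self, ne_eq, OfNat.ofNat_ne_zero, not_false_eq_true, zero_pow,
        Finset.sum_const_zero] at h1
      have h2 : (0:ℝ) < ΛSep/n2 := by positivity
      linarith
  have hsub : {i | g i ≠ g1 i} ⊆ (↑S : Set (Fin n1)) := by
    intro i hi
    simp only [Set.mem_setOf_eq] at hi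
    by_contra hiS
    have hiS' : i ∉ S := fun h => hiS (Finset.mem_coe.mpr h)
    have h1 : Xt i = Xt (rep (g i)) := hgrep i
    have hPi : P i = P (rep (g1 i)) := hProw _ _ (hrep1 (g1 i)).symm
    have h2 : δ ≤ dist (ev (P (rep (g1 i)))) (ev (P (rep (g i)))) :=
      hdistPP _ _ (by rw [hrep1, hrep1]; exact Ne.symm hi)
    have h3 : dist (ev (Xt i)) (ev (P i)) < δ/2 := hdistXP i hiS'
    have h4 : dist (ev (Xt (rep (g i)))) (ev (P (rep (g i)))) < δ/2 := hdistXP _ (hrep2 _)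
    have h5 : dist (ev (P (rep (g1 i)))) (ev (P (rep (g i)))) ≤
        dist (ev (P i)) (ev (Xt i)) + dist (ev (Xt (rep (g i)))) (ev (P (rep (g i)))) := by
      calc dist (ev (P (rep (g1 i)))) (ev (P (rep (g i))))
          = dist (ev (P i)) (ev (P (rep (g i)))) := by rw [hPi]
        _ ≤ dist (ev (P i)) (ev (Xt (rep (g i)))) +
            dist (ev (Xt (rep (g i)))) (ev (P (rep (g i)))) := dist_triangle _ _ _
        _ = dist (ev (P i)) (ev (Xt i)) +
            dist (ev (Xt (rep (g i)))) (ev (P (rep (g i)))) := by rw [← h1]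
    rw [dist_comm (ev (P i))] at h5
    linarith
  have hbddMis : BddBelow {t | ∃ ga g' : Fin n1 → Fin k1, IsLabeling Xt ga ∧ IsLabeling P g' ∧
      t = (Set.ncard {i | ga i ≠ g' i} : ℝ) / n1} := by
    refine ⟨0, ?_⟩
    rintro t ⟨ga, g', _, _, rfl⟩
    positivity
  have hMis : Mis k1 Xt P ≤ (Set.ncard {i | g i ≠ g1 i} : ℝ)/n1 :=
    csInf_le hbddMis ⟨g, g1, hglab, hg1lab, rfl⟩
  have hncard : (Set.ncard {i | g i ≠ g1 i} : ℝ) ≤ S.card := by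
    have h := Set.ncard_le_ncard hsub (Set.toFinite _)
    rw [Set.ncard_coe_finset] at h
    exact_mod_cast h
  calc Mis k1 Xt P ≤ (Set.ncard {i | g i ≠ g1 i} : ℝ)/n1 := hMis
    _ ≤ (S.card:ℝ)/n1 := by gcongr
    _ ≤ 32 * C ^ 2 * (1 + κ) ^ 2 * β2 * (kk:ℝ) * k2 * ((n2:ℝ)/n1) * ΛInf / ΛSep := by
        rw [div_le_div_iff₀ hn1R hSep]
        exact hcard_le

end
end

section
/- Guarantee for the greedy covering replacement of the k-means step: let x1,…,xn ∈ ℝ^d take exactly k distinct values q1,…,qk, defining clusters C_r = {i : x_i = q_r} with sizes n_r, n∧ = min_r n_r, and separations δ_r = min_{ℓ≠r} ‖q_ℓ − q_r‖_2, δ∧ = min_r δ_r. Let x̂1,…,x̂n ∈ ℝ^d satisfy Σ_{i=1}^n ‖x_i − x̂_i‖_2² ≤ ε², and set d(i,j) = ‖x̂_i − x̂_j‖_2. Assume for some γ ∈ (0,1) and β ≥ 1: (i) n_r ≤ β·n∧ for all r ∈ [k]; (ii) 2ε/√(γ·n∧) < δ∧/3; (iii) (γ/(1−γ))·β + γ <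 1 − γ. Let ρ ∈ [2ε/√(γ·n∧), δ∧/3), and let Ĉ1,…,Ĉk ⊆ [n] be produced by any execution of the greedy algorithm: starting with S = [n], repeat for r = 1,…,k: choose i0 ∈ S maximizing the size of B(i0) = {j ∈ S : d(i0,j) ≤ ρ}, set Ĉ_r = B(i0), and replace S by S \ Ĉ_r. Then there is a permutation σ of [k] such that Σ_{r=1}^k |C_{σ(r)} \ Ĉ_r| ≤ 8·ε²/ρ²; in particular the fraction of misclassified or unlabeled points is at most 8·ε²/(n·ρ²). -/
open Matrix Finset

attribute [local instance] Classical.propDecidable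

noncomputable section

/-- Euclidean distance between two vectors. -/
def dist2 {d : Type*} [Fintype d] (u v : d → ℝ) : ℝ :=
  Real.sqrt (∑ j, (u j - v j) ^ 2)

/-- An execution of the greedy covering algorithm (Algorithm 4) with pairwise
distances `dd` and radius `ρ`, producing clusters `C 0, …, C (k-1)`:
starting from `S 0 = [n]`, at stage `r` a point `i0 ∈ S r` maximizing the size of
`B(i0) = {j ∈ S r : dd i0 j ≤ ρ}` is chosen (ties broken arbitrarily),
`C r = B(i0)`, and `S (r+1) = S r \ C r`. -/
def GreedyExec {n k : ℕ} (dd : Fin n → Fin n → ℝ) (ρ : ℝ)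
    (C : Fin k → Finset (Fin n)) : Prop :=
  ∃ S : ℕ → Finset (Fin n), S 0 = Finset.univ ∧
    ∀ r : Fin k, ∃ i0 ∈ S (r : ℕ),
      (∀ i ∈ S (r : ℕ),
        ((S (r : ℕ)).filter fun j => dd i j ≤ ρ).card ≤
          ((S (r : ℕ)).filter fun j => dd i0 j ≤ ρ).card) ∧
      C r = (S (r : ℕ)).filter (fun j => dd i0 j ≤ ρ) ∧
      S ((r : ℕ) + 1) = S (r : ℕ) \ C r

lemma dist2_eq_dist {d : Type*} [Fintype d] (u v : d → ℝ) :
    dist2 u v = dist ((WithLp.equiv 2 (d → ℝ)).symm u) ((WithLp.equiv 2 (d → ℝ)).symm v) := by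
  simp [dist2, EuclideanSpace.dist_eq, Real.dist_eq, sq_abs]

lemma dist2_nonneg {d : Type*} [Fintype d] (u v : d → ℝ) : 0 ≤ dist2 u v := by
  rw [dist2_eq_dist]; exact dist_nonneg

lemma dist2_comm {d : Type*} [Fintype d] (u v : d → ℝ) : dist2 u v = dist2 v u := by
  rw [dist2_eq_dist, dist2_eq_dist, dist_comm]

lemma dist2_triangle {d : Type*} [Fintype d] (u v w : d → ℝ) :
    dist2 u w ≤ dist2 u v + dist2 v w := by
  rw [dist2_eq_dist, dist2_eq_dist, dist2_eq_dist]; exact dist_triangle _ _ _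

lemma dist2_triangle4 {d : Type*} [Fintype d] (u v w z : d → ℝ) :
    dist2 u z ≤ dist2 u v + dist2 v w + dist2 w z := by
  rw [dist2_eq_dist, dist2_eq_dist, dist2_eq_dist, dist2_eq_dist]
  exact dist_triangle4 _ _ _ _

set_option maxHeartbeats 2000000 in
/-- Theorem B.1 (guarantee for the greedy covering replacement of the k-means step). -/
theorem stmt19 (n d k : ℕ)
    (x xh : Fin n → Fin d → ℝ)
    (q : Fin k → Fin d → ℝ) (hq_inj : Function.Injective q)
    (hq_cov : ∀ i, ∃ r, x i = q r) (hq_surj : ∀ r, ∃ i, x i = q r)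
    (nmin : ℝ)
    (hnmin : nmin = sInf {m : ℝ | ∃ r, m = ((univ.filter fun i => x i = q r).card : ℝ)})
    (δmin : ℝ)
    (hδmin : δmin = sInf {t : ℝ | ∃ r : Fin k,
      t = sInf {u : ℝ | ∃ ℓ, ℓ ≠ r ∧ u = dist2 (q ℓ) (q r)}})
    (ε : ℝ) (hε0 : 0 ≤ ε) (hε : ∑ i, dist2 (x i) (xh i) ^ 2 ≤ ε ^ 2)
    (γ β : ℝ) (hγ0 : 0 < γ) (hγ1 : γ < 1) (hβ : 1 ≤ β)
    -- (i) clusters are β-balanced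
    (hbal : ∀ r, ((univ.filter fun i => x i = q r).card : ℝ) ≤ β * nmin)
    -- (ii)
    (hsep : 2 * ε / Real.sqrt (γ * nmin) < δmin / 3)
    -- (iii)
    (hγβ : (γ / (1 - γ)) * β + γ < 1 - γ)
    (ρ : ℝ) (hρ1 : 2 * ε / Real.sqrt (γ * nmin) ≤ ρ) (hρ2 : ρ < δmin / 3)
    (Chat : Fin k → Finset (Fin n))
    (hexec : GreedyExec (fun i j => dist2 (xh i) (xh j)) ρ Chat) :
    ∃ σ : Equiv.Perm (Fin k),
      (∑ r, (((univ.filter fun i => x i = q (σ r)) \ Chat r).card : ℝ)) ≤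
        8 * ε ^ 2 / ρ ^ 2 ∧
      (∑ r, (((univ.filter fun i => x i = q (σ r)) \ Chat r).card : ℝ)) / n ≤
        8 * ε ^ 2 / (n * ρ ^ 2) := by
  -- second conjunct follows from the first
  suffices hmain : ∃ σ : Equiv.Perm (Fin k),
      (∑ r, (((univ.filter fun i => x i = q (σ r)) \ Chat r).card : ℝ)) ≤
        8 * ε ^ 2 / ρ ^ 2 by
    obtain ⟨σ, hσ⟩ := hmain
    refine ⟨σ, hσ, ?_⟩
    have hrw : 8 * ε ^ 2 / (n * ρ ^ 2) = (8 * ε ^ 2 / ρ ^ 2) / n := by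
      rw [div_div, mul_comm (ρ^2) (n:ℝ)]
    rw [hrw]
    exact div_le_div_of_nonneg_right hσ (Nat.cast_nonneg n)
  -- dispose of the degenerate case k = 0
  rcases Nat.eq_zero_or_pos k with hk0 | hkpos
  · subst hk0
    refine ⟨1, ?_⟩
    have : (univ : Finset (Fin 0)) = ∅ := Finset.univ_eq_empty
    rw [this, Finset.sum_empty]
    positivity
  -- notation
  set Cl : Fin k → Finset (Fin n) := fun c => univ.filter fun i => x i = q c with hCldef
  set good : Fin n → Prop := fun i => dist2 (x i) (xh i) ≤ ρ / 2 with hgooddef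
  set Bs : Finset (Fin n) := univ.filter fun i => ¬ good i with hBsdef
  set G : Fin k → Finset (Fin n) := fun c => (Cl c).filter good with hGdef
  choose cl hcl using hq_cov
  have hmemCl : ∀ (i : Fin n) (c : Fin k), i ∈ Cl c ↔ x i = q c := by
    intro i c; simp [hCldef]
  have hmemG : ∀ (i : Fin n) (c : Fin k), i ∈ G c ↔ (x i = q c ∧ good i) := by
    intro i c; simp [hGdef, hCldef, Finset.mem_filter]
  have hmemBs : ∀ i : Fin n, i ∈ Bs ↔ ¬ good i := by
    intro i; simp [hBsdef]
  -- basic numeric facts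
  have hnmin_le : ∀ c : Fin k, nmin ≤ ((Cl c).card : ℝ) := by
    intro c
    rw [hnmin]
    exact csInf_le ((Set.finite_range fun c : Fin k => ((Cl c).card : ℝ)).bddBelow.mono
      (by rintro m ⟨r, rfl⟩; exact ⟨r, rfl⟩)) ⟨c, rfl⟩
  have hnmin1 : (1 : ℝ) ≤ nmin := by
    rw [hnmin]
    apply le_csInf
    · obtain ⟨c⟩ := Fin.pos_iff_nonempty.mp hkpos
      exact ⟨_, c, rfl⟩
    · rintro m ⟨r, rfl⟩
      obtain ⟨i, hi⟩ := hq_surj r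
      have : i ∈ univ.filter fun i => x i = q r := by simp [hi]
      have := Finset.card_pos.mpr ⟨i, this⟩
      exact_mod_cast this
  have hnminpos : (0:ℝ) < nmin := lt_of_lt_of_le one_pos hnmin1
  have hρ0 : 0 ≤ ρ := le_trans (by positivity) hρ1
  have hδle : ∀ ℓ r : Fin k, ℓ ≠ r → δmin ≤ dist2 (q ℓ) (q r) := by
    intro ℓ r hne
    rw [hδmin]
    have h1 : δmin ≤ sInf {u : ℝ | ∃ ℓ, ℓ ≠ r ∧ u = dist2 (q ℓ) (q r)} := by
      rw [hδmin]
      refine csInf_le ?_ ⟨r, rfl⟩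
      refine Set.Finite.bddBelow ?_
      refine Set.Finite.subset (Set.finite_range fun r : Fin k =>
        sInf {u : ℝ | ∃ ℓ, ℓ ≠ r ∧ u = dist2 (q ℓ) (q r)}) ?_
      rintro t ⟨r, rfl⟩; exact ⟨r, rfl⟩
    refine le_trans (hδmin ▸ h1) ?_
    refine csInf_le ?_ ⟨ℓ, hne, rfl⟩
    refine Set.Finite.bddBelow ?_
    refine Set.Finite.subset (Set.finite_range fun ℓ : Fin k => dist2 (q ℓ) (q r)) ?_
    rintro u ⟨ℓ, _, rfl⟩; exact ⟨ℓ, rfl⟩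
  have hδρ : 3 * ρ < δmin := by linarith
  -- bad set bounds
  have hBsum : (Bs.card : ℝ) * (ρ/2)^2 ≤ ε ^ 2 := by
    have h1 : ∀ i ∈ Bs, (ρ/2)^2 ≤ dist2 (x i) (xh i) ^ 2 := by
      intro i hi
      have : ¬ good i := (hmemBs i).mp hi
      have h2 : ρ/2 < dist2 (x i) (xh i) := by
        simp only [hgooddef] at this; linarith [not_le.mp this]
      exact pow_le_pow_left₀ (by linarith) h2.le 2
    calc (Bs.card : ℝ) * (ρ/2)^2 = ∑ _i ∈ Bs, (ρ/2)^2 := by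
          rw [Finset.sum_const, nsmul_eq_mul]
      _ ≤ ∑ i ∈ Bs, dist2 (x i) (xh i) ^ 2 := Finset.sum_le_sum h1
      _ ≤ ∑ i, dist2 (x i) (xh i) ^ 2 := by
          refine Finset.sum_le_sum_of_subset_of_nonneg (Finset.subset_univ _) ?_
          intro i _ _; positivity
      _ ≤ ε ^ 2 := hε
  have hγnpos : (0:ℝ) < γ * nmin := mul_pos hγ0 hnminpos
  have h4ε : 4 * ε^2 ≤ ρ^2 * (γ * nmin) := by
    have hsq : 0 < Real.sqrt (γ*nmin) := Real.sqrt_pos.mpr hγnpos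
    have h1 : 2*ε ≤ ρ * Real.sqrt (γ*nmin) := (div_le_iff₀ hsq).mp hρ1
    have h2 : (2*ε)^2 ≤ (ρ * Real.sqrt (γ*nmin))^2 := pow_le_pow_left₀ (by linarith) h1 2
    have h3 : (ρ * Real.sqrt (γ*nmin))^2 = ρ^2 * (γ*nmin) := by
      rw [mul_pow, Real.sq_sqrt hγnpos.le]
    nlinarith
  have hBempty0 : ρ = 0 → Bs = ∅ := by
    intro hρ
    have h4 : 4 * ε^2 ≤ 0 := by
      have := h4ε
      rw [hρ] at this
      simpa using this
    have hε' : ε = 0 := by nlinarith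
    have hall : ∀ i, dist2 (x i) (xh i) = 0 := by
      intro i
      have h1 : ∑ i, dist2 (x i) (xh i) ^ 2 ≤ 0 := by rw [hε'] at hε; simpa using hε
      have h2 : ∀ j ∈ (univ : Finset (Fin n)), 0 ≤ dist2 (x j) (xh j) ^ 2 := by
        intro j _; positivity
      have h3 := (Finset.sum_eq_zero_iff_of_nonneg h2).mp (le_antisymm h1 (Finset.sum_nonneg h2))
      have h4 := h3 i (Finset.mem_univ i)
      have := dist2_nonneg (x i) (xh i)
      nlinarith
    refine Finset.eq_empty_of_forall_notMem ?_
    intro i hi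
    exact (hmemBs i).mp hi (by simp only [hgooddef]; rw [hall i, hρ]; norm_num)
  have hBγ : (Bs.card : ℝ) ≤ γ * nmin := by
    rcases eq_or_lt_of_le hρ0 with hρz | hρpos
    · rw [hBempty0 hρz.symm]; simpa using hγnpos.le
    · have hρ2pos : (0:ℝ) < ρ^2 := by positivity
      nlinarith [hBsum, h4ε, hρ2pos]
  have hB8 : 2 * (Bs.card : ℝ) ≤ 8 * ε^2 / ρ^2 := by
    rcases eq_or_lt_of_le hρ0 with hρz | hρpos
    · rw [hBempty0 hρz.symm]
      simp
      positivity
    · rw [le_div_iff₀ (by positivity)]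
      nlinarith [hBsum]
  -- geometric facts
  have hsame : ∀ i j : Fin n, good i → good j → x i = x j → dist2 (xh i) (xh j) ≤ ρ := by
    intro i j hi hj hij
    have h1 := dist2_triangle (xh i) (x i) (xh j)
    have h2 : dist2 (xh i) (x i) = dist2 (x i) (xh i) := dist2_comm _ _
    have h3 : dist2 (x i) (xh j) = dist2 (x j) (xh j) := by rw [hij]
    simp only [hgooddef] at hi hj
    linarith
  have hdiff : ∀ i j : Fin n, good i → good j → x i ≠ x j → 2 * ρ < dist2 (xh i) (xh j) := by
    intro i j hi hj hij
    have h1 := dist2_triangle4 (x i) (xh i) (xh j) (x j)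
    have h2 : δmin ≤ dist2 (x i) (x j) := by
      have hcli := hcl i; have hclj := hcl j
      have hne : cl i ≠ cl j := by
        intro h; apply hij; rw [hcli, hclj, h]
      rw [hcli, hclj]; exact hδle _ _ hne
    have h3 : dist2 (xh j) (x j) = dist2 (x j) (xh j) := dist2_comm _ _
    simp only [hgooddef] at hi hj
    linarith
  -- the algorithm data
  unfold GreedyExec at hexec
  obtain ⟨S, hS0, hstep⟩ := hexec
  choose i0 hi0S hi0max hi0C hi0succ using hstep
  have hChat_sub : ∀ r : Fin k, Chat r ⊆ S (r : ℕ) := by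
    intro r; rw [hi0C r]; exact Finset.filter_subset _ _
  have hChat_mem : ∀ (r : Fin k) (j : Fin n),
      j ∈ Chat r ↔ (j ∈ S (r:ℕ) ∧ dist2 (xh (i0 r)) (xh j) ≤ ρ) := by
    intro r j; rw [hi0C r]; simp [Finset.mem_filter]
  have hSstep : ∀ m : ℕ, m < k → S (m+1) ⊆ S m := by
    intro m hm
    have := hi0succ ⟨m, hm⟩
    simp only [Fin.val_mk] at this
    rw [this]; exact Finset.sdiff_subset
  have hSmono : ∀ a b : ℕ, a ≤ b → b ≤ k → S b ⊆ S a := by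
    intro a b hab hbk
    induction b with
    | zero => rw [Nat.le_zero.mp hab]
    | succ b ih =>
      rcases Nat.eq_or_lt_of_le hab with h | h
      · rw [h]
      · exact (hSstep b (by omega)).trans (ih (by omega) (by omega))
  -- lower bound on good part of clusters
  have hGlb : ∀ c : Fin k, (1 - γ) * nmin ≤ ((G c).card : ℝ) := by
    intro c
    have h1 : Cl c ⊆ G c ∪ Bs := by
      intro i hi
      by_cases hg : good i
      · exact Finset.mem_union_left _ (by rw [hmemG]; exact ⟨(hmemCl i c).mp hi, hg⟩)
      · exact Finset.mem_union_right _ ((hmemBs i).mpr hg)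
    have h2 : (Cl c).card ≤ (G c).card + Bs.card :=
      (Finset.card_le_card h1).trans (Finset.card_union_le _ _)
    have h3 := hnmin_le c
    have h2' : ((Cl c).card : ℝ) ≤ ((G c).card : ℝ) + (Bs.card : ℝ) := by exact_mod_cast h2
    linarith
  have h2γ : 2 * γ < 1 - γ := by
    have h1 : γ ≤ γ / (1 - γ) := by
      rw [le_div_iff₀ (by linarith)]
      nlinarith
    nlinarith
  have hGpos : ∀ c : Fin k, (0:ℝ) < ((G c).card : ℝ) := by
    intro c
    have := hGlb c
    nlinarith
  have hGne : ∀ c : Fin k, (G c).Nonempty := by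
    intro c
    rw [← Finset.card_pos]
    exact_mod_cast hGpos c
  -- main induction
  have main : ∀ m : ℕ, m ≤ k →
      (k ≤ (univ.filter fun c => G c ⊆ S m).card + m) ∧
      (∀ c : Fin k, ¬ G c ⊆ S m → ((G c ∩ S m).card : ℝ) ≤ γ * nmin) ∧
      (∀ r : Fin k, (r : ℕ) < m → ∃ c : Fin k,
        G c ⊆ S (r:ℕ) ∧ (∀ j ∈ Chat r, good j → j ∈ G c) ∧
        (G c ∩ Chat r).Nonempty ∧
        ((G c \ Chat r).card : ℝ) ≤ ((Bs ∩ Chat r).card : ℝ)) := by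
    intro m
    induction m with
    | zero =>
      intro _
      refine ⟨?_, ?_, ?_⟩
      · have : (univ.filter fun c : Fin k => G c ⊆ S 0) = univ := by
          refine Finset.filter_true_of_mem ?_
          intro c _; rw [hS0]; exact Finset.subset_univ _
        rw [this]; simp
      · intro c hc; exact absurd (hS0 ▸ Finset.subset_univ (G c)) hc
      · intro r hr; omega
    | succ m ih =>
      intro hmk
      have hm : m < k := hmk
      obtain ⟨ih1, ih2, ih3⟩ := ih hm.le
      set r : Fin k := ⟨m, hm⟩ with hrdef
      have hrm : (r : ℕ) = m := rfl
      -- ball bounds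
      have hball : ∀ c : Fin k, G c ⊆ S m → (G c).card ≤ (Chat r).card := by
        intro c hc
        obtain ⟨g, hg⟩ := hGne c
        have hgS : g ∈ S m := hc hg
        have h1 : G c ⊆ (S m).filter fun j => dist2 (xh g) (xh j) ≤ ρ := by
          intro j hj
          rw [Finset.mem_filter]
          refine ⟨hc hj, ?_⟩
          have hgG := (hmemG g c).mp hg
          have hjG := (hmemG j c).mp hj
          exact hsame g j hgG.2 hjG.2 (hgG.1.trans hjG.1.symm)
        calc (G c).card ≤ ((S m).filter fun j => dist2 (xh g) (xh j) ≤ ρ).card :=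
              Finset.card_le_card h1
          _ ≤ ((S m).filter fun j => dist2 (xh (i0 r)) (xh j) ≤ ρ).card := hi0max r g hgS
          _ = (Chat r).card := by rw [hi0C r]
      -- intact cluster exists
      have hIne : ∃ c0 : Fin k, G c0 ⊆ S m := by
        have h1 : 0 < (univ.filter fun c : Fin k => G c ⊆ S m).card := by omega
        obtain ⟨c0, hc0⟩ := Finset.card_pos.mp h1
        exact ⟨c0, (Finset.mem_filter.mp hc0).2⟩
      obtain ⟨c0, hc0⟩ := hIne
      have hChatlb : (1 - γ) * nmin ≤ ((Chat r).card : ℝ) := by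
        refine le_trans (hGlb c0) ?_
        exact_mod_cast hball c0 hc0
      -- key claim
      have hkey : ∃ c : Fin k, G c ⊆ S m ∧ (G c ∩ Chat r).Nonempty := by
        by_contra hcon
        push_neg at hcon
        by_cases hgood : ∃ g1 ∈ Chat r, good g1
        · obtain ⟨g1, hg1C, hg1g⟩ := hgood
          set c1 := cl g1 with hc1def
          have hg1G : g1 ∈ G c1 := (hmemG g1 c1).mpr ⟨hcl g1, hg1g⟩
          have hc1ni : ¬ G c1 ⊆ S m := by
            intro h
            exact Finset.nonempty_iff_ne_empty.mp ⟨g1, Finset.mem_inter.mpr ⟨hg1G, hg1C⟩⟩ (hcon c1 h)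
          have hsub : Chat r ⊆ Bs ∪ (G c1 ∩ S m) := by
            intro j hj
            by_cases hgj : good j
            · have hxj : x j = x g1 := by
                by_contra hne
                have h1 := hdiff g1 j hg1g hgj (fun h => hne h.symm)
                have h2 := ((hChat_mem r g1).mp hg1C).2
                have h3 := ((hChat_mem r j).mp hj).2
                have h4 := dist2_triangle (xh g1) (xh (i0 r)) (xh j)
                have h5 : dist2 (xh g1) (xh (i0 r)) = dist2 (xh (i0 r)) (xh g1) :=
                  dist2_comm _ _
                linarith
              refine Finset.mem_union_right _ (Finset.mem_inter.mpr ⟨?_, hChat_sub r hj⟩)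
              exact (hmemG j c1).mpr ⟨hxj.trans (hcl g1), hgj⟩
            · exact Finset.mem_union_left _ ((hmemBs j).mpr hgj)
          have h1 : ((Chat r).card : ℝ) ≤ (Bs.card : ℝ) + ((G c1 ∩ S m).card : ℝ) := by
            have := (Finset.card_le_card hsub).trans (Finset.card_union_le _ _)
            exact_mod_cast this
          have h2 := ih2 c1 hc1ni
          nlinarith
        · push_neg at hgood
          have hsub : Chat r ⊆ Bs := by
            intro j hj
            exact (hmemBs j).mpr (hgood j hj)
          have h1 : ((Chat r).card : ℝ) ≤ (Bs.card : ℝ) := by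
            exact_mod_cast Finset.card_le_card hsub
          nlinarith
      obtain ⟨c, hcS, hcC⟩ := hkey
      obtain ⟨w, hw⟩ := hcC
      have hwG : w ∈ G c := (Finset.mem_inter.mp hw).1
      have hwC : w ∈ Chat r := (Finset.mem_inter.mp hw).2
      have hwgood : good w := ((hmemG w c).mp hwG).2
      -- all good points of Chat r lie in G c
      have hgoodin : ∀ j ∈ Chat r, good j → j ∈ G c := by
        intro j hj hgj
        have hxj : x j = x w := by
          by_contra hne
          have h1 := hdiff w j hwgood hgj (fun h => hne h.symm)
          have h2 := ((hChat_mem r w).mp hwC).2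
          have h3 := ((hChat_mem r j).mp hj).2
          have h4 := dist2_triangle (xh w) (xh (i0 r)) (xh j)
          have h5 : dist2 (xh w) (xh (i0 r)) = dist2 (xh (i0 r)) (xh w) := dist2_comm _ _
          linarith
        exact (hmemG j c).mpr ⟨hxj.trans ((hmemG w c).mp hwG).1, hgj⟩
      -- the quantitative bound
      have hbd : ((G c \ Chat r).card : ℝ) ≤ ((Bs ∩ Chat r).card : ℝ) := by
        have h1 : (G c).card ≤ (Chat r).card := hball c hcS
        have h2 : Chat r ⊆ (Bs ∩ Chat r) ∪ (G c ∩ Chat r) := by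
          intro j hj
          by_cases hgj : good j
          · exact Finset.mem_union_right _ (Finset.mem_inter.mpr ⟨hgoodin j hj hgj, hj⟩)
          · exact Finset.mem_union_left _ (Finset.mem_inter.mpr ⟨(hmemBs j).mpr hgj, hj⟩)
        have h3 : (Chat r).card ≤ (Bs ∩ Chat r).card + (G c ∩ Chat r).card :=
          (Finset.card_le_card h2).trans (Finset.card_union_le _ _)
        have h4 : (G c \ Chat r).card + (G c ∩ Chat r).card = (G c).card :=
          Finset.card_sdiff_add_card_inter _ _
        have : (G c \ Chat r).card ≤ (Bs ∩ Chat r).card := by omega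
        exact_mod_cast this
      -- disjointness of other clusters from Chat r
      have hGdisj : ∀ c' : Fin k, c' ≠ c → ∀ j ∈ G c', j ∉ Chat r := by
        intro c' hne j hjG hjC
        have hgj : good j := ((hmemG j c').mp hjG).2
        have hjGc := hgoodin j hjC hgj
        have h1 : x j = q c' := ((hmemG j c').mp hjG).1
        have h2 : x j = q c := ((hmemG j c).mp hjGc).1
        exact hne (hq_inj (h1.symm.trans h2))
      have hS1 : S (m+1) = S m \ Chat r := hi0succ r
      refine ⟨?_, ?_, ?_⟩
      · -- Inv1
        have hsub : (univ.filter fun c' : Fin k => G c' ⊆ S m).erase c ⊆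
            univ.filter fun c' : Fin k => G c' ⊆ S (m+1) := by
          intro c' hc'
          have hne := Finset.ne_of_mem_erase hc'
          have hc'S : G c' ⊆ S m := (Finset.mem_filter.mp (Finset.mem_of_mem_erase hc')).2
          refine Finset.mem_filter.mpr ⟨Finset.mem_univ _, ?_⟩
          intro j hj
          rw [hS1, Finset.mem_sdiff]
          exact ⟨hc'S hj, hGdisj c' hne j hj⟩
        have h1 := Finset.card_le_card hsub
        have h2 : (univ.filter fun c' : Fin k => G c' ⊆ S m).card - 1 ≤
            ((univ.filter fun c' : Fin k => G c' ⊆ S m).erase c).card :=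
          Finset.pred_card_le_card_erase
        omega
      · -- Inv2
        intro c' hns
        by_cases hc'c : c' = c
        · subst hc'c
          have heq : G c' ∩ S (m+1) = G c' \ Chat r := by
            rw [hS1]
            ext j
            simp only [Finset.mem_inter, Finset.mem_sdiff]
            constructor
            · rintro ⟨h1, h2, h3⟩; exact ⟨h1, h3⟩
            · rintro ⟨h1, h2⟩; exact ⟨h1, hcS h1, h2⟩
          rw [heq]
          have h1 : ((Bs ∩ Chat r).card : ℝ) ≤ (Bs.card : ℝ) := by
            exact_mod_cast Finset.card_le_card (Finset.inter_subset_left)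
          linarith
        · have heq : G c' ∩ S (m+1) = G c' ∩ S m := by
            rw [hS1]
            ext j
            simp only [Finset.mem_inter, Finset.mem_sdiff]
            constructor
            · rintro ⟨h1, h2, h3⟩; exact ⟨h1, h2⟩
            · rintro ⟨h1, h2⟩; exact ⟨h1, h2, hGdisj c' hc'c j h1⟩
          rw [heq]
          refine ih2 c' ?_
          intro hsub'
          apply hns
          intro j hj
          rw [hS1, Finset.mem_sdiff]
          exact ⟨hsub' hj, hGdisj c' hc'c j hj⟩
      · -- step records
        intro r' hr'
        rcases Nat.lt_succ_iff_lt_or_eq.mp hr' with h | h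
        · exact ih3 r' h
        · have : r' = r := Fin.ext h
          subst this
          exact ⟨c, hrm ▸ hcS, hgoodin, ⟨w, hw⟩, hbd⟩
  obtain ⟨-, -, hrec⟩ := main k le_rfl
  choose σ0 hσ1 hσ2 hσ3 hσ4 using fun r : Fin k => hrec r r.isLt
  -- injectivity of σ0
  have hkey2 : ∀ a b : Fin k, (a:ℕ) < (b:ℕ) → σ0 a ≠ σ0 b := by
    intro a b hlt heq
    obtain ⟨w, hw⟩ := hσ3 a
    have hwG : w ∈ G (σ0 a) := (Finset.mem_inter.mp hw).1
    have hwC : w ∈ Chat a := (Finset.mem_inter.mp hw).2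
    have h1 : w ∈ S (b:ℕ) := hσ1 b (heq ▸ hwG)
    have h2 : S (b:ℕ) ⊆ S ((a:ℕ)+1) := hSmono _ _ hlt b.isLt.le
    have h3 := h2 h1
    rw [hi0succ a, Finset.mem_sdiff] at h3
    exact h3.2 hwC
  have hinj : Function.Injective σ0 := by
    intro a b hab
    rcases lt_trichotomy (a:ℕ) (b:ℕ) with h | h | h
    · exact absurd hab (hkey2 a b h)
    · exact Fin.ext h
    · exact absurd hab.symm (hkey2 b a h)
  have hbij : Function.Bijective σ0 := Finite.injective_iff_bijective.mp hinj
  refine ⟨Equiv.ofBijective σ0 hbij, ?_⟩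
  have hgoal : ∀ r : Fin k, (univ.filter fun i => x i = q ((Equiv.ofBijective σ0 hbij) r))
      = Cl (σ0 r) := by
    intro r; rfl
  calc (∑ r, (((univ.filter fun i => x i = q ((Equiv.ofBijective σ0 hbij) r)) \ Chat r).card : ℝ))
      = ∑ r, ((Cl (σ0 r) \ Chat r).card : ℝ) := by
        refine Finset.sum_congr rfl ?_
        intro r _; rw [hgoal r]
    _ ≤ ∑ r, (((Bs ∩ Chat r).card : ℝ) + ((Bs ∩ Cl (σ0 r)).card : ℝ)) := by
        refine Finset.sum_le_sum ?_
        intro r _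
        have hsub : Cl (σ0 r) \ Chat r ⊆ (G (σ0 r) \ Chat r) ∪ (Bs ∩ Cl (σ0 r)) := by
          intro i hi
          rw [Finset.mem_sdiff] at hi
          by_cases hgi : good i
          · refine Finset.mem_union_left _ ?_
            rw [Finset.mem_sdiff]
            exact ⟨(hmemG i (σ0 r)).mpr ⟨(hmemCl i (σ0 r)).mp hi.1, hgi⟩, hi.2⟩
          · exact Finset.mem_union_right _
              (Finset.mem_inter.mpr ⟨(hmemBs i).mpr hgi, hi.1⟩)
        have h1 : ((Cl (σ0 r) \ Chat r).card : ℝ) ≤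
            ((G (σ0 r) \ Chat r).card : ℝ) + ((Bs ∩ Cl (σ0 r)).card : ℝ) := by
          have := (Finset.card_le_card hsub).trans (Finset.card_union_le _ _)
          exact_mod_cast this
        linarith [hσ4 r]
    _ = (∑ r, ((Bs ∩ Chat r).card : ℝ)) + ∑ r, ((Bs ∩ Cl (σ0 r)).card : ℝ) :=
        Finset.sum_add_distrib
    _ ≤ (Bs.card : ℝ) + (Bs.card : ℝ) := by
        have hd1' : ∀ a b : Fin k, (a:ℕ) < (b:ℕ) →
            Disjoint (Bs ∩ Chat a) (Bs ∩ Chat b) := by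
          intro a b hlt
          rw [Finset.disjoint_left]
          intro j hja hjb
          have h1 : j ∈ Chat b := (Finset.mem_inter.mp hjb).2
          have h2 : j ∈ S (b:ℕ) := hChat_sub b h1
          have h3 := hSmono ((a:ℕ)+1) (b:ℕ) hlt b.isLt.le h2
          rw [hi0succ a, Finset.mem_sdiff] at h3
          exact h3.2 (Finset.mem_inter.mp hja).2
        have hd1 : ∀ a ∈ (univ : Finset (Fin k)), ∀ b ∈ (univ : Finset (Fin k)), a ≠ b →
            Disjoint (Bs ∩ Chat a) (Bs ∩ Chat b) := by
          intro a _ b _ hab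
          rcases lt_trichotomy (a:ℕ) (b:ℕ) with h | h | h
          · exact hd1' a b h
          · exact absurd (Fin.ext h) hab
          · exact (hd1' b a h).symm
        have hd2 : ∀ a ∈ (univ : Finset (Fin k)), ∀ b ∈ (univ : Finset (Fin k)), a ≠ b →
            Disjoint (Bs ∩ Cl (σ0 a)) (Bs ∩ Cl (σ0 b)) := by
          intro a _ b _ hab
          rw [Finset.disjoint_left]
          intro j hja hjb
          have h1 : x j = q (σ0 a) := (hmemCl j _).mp (Finset.mem_inter.mp hja).2
          have h2 : x j = q (σ0 b) := (hmemCl j _).mp (Finset.mem_inter.mp hjb).2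
          exact hab (hinj (hq_inj (h1.symm.trans h2)))
        have e1 : ∑ r, ((Bs ∩ Chat r).card : ℝ) ≤ (Bs.card : ℝ) := by
          have := Finset.card_biUnion hd1
          have hsub : (univ.biUnion fun r : Fin k => Bs ∩ Chat r) ⊆ Bs := by
            intro j hj
            obtain ⟨r, _, hr⟩ := Finset.mem_biUnion.mp hj
            exact (Finset.mem_inter.mp hr).1
          have h2 := Finset.card_le_card hsub
          rw [this] at h2
          exact_mod_cast h2
        have e2 : ∑ r, ((Bs ∩ Cl (σ0 r)).card : ℝ) ≤ (Bs.card : ℝ) := by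
          have := Finset.card_biUnion hd2
          have hsub : (univ.biUnion fun r : Fin k => Bs ∩ Cl (σ0 r)) ⊆ Bs := by
            intro j hj
            obtain ⟨r, _, hr⟩ := Finset.mem_biUnion.mp hj
            exact (Finset.mem_inter.mp hr).1
          have h2 := Finset.card_le_card hsub
          rw [this] at h2
          exact_mod_cast h2
        linarith
    _ ≤ 8 * ε ^ 2 / ρ ^ 2 := by linarith [hB8]


end
end
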